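/- Let V ⊆ ℂ be open, let F : V → ℂ be twice continuously differentiable, and let ν : V → ℂ be anti-holomorphic (∂ν ≡ 0 on V) with |ν(ζ)| < 1 for all ζ ∈ V. If F satisfies the conjugate Beltrami equation ∂̄F(ζ) = ν(ζ)·conj(∂F(ζ)) for all ζ ∈ V, then F is harmonic on V, i.e. ∂∂̄F ≡ 0 on V. -/

import Mathlib

open Complex

/-- The Wirtinger derivative `∂F = ½(∂ₓF - i ∂_yF)`. -/
noncomputable def wirtingerD (F : ℂ → ℂ) (ζ : ℂ) : ℂ :=
  (1 / 2) * (fderiv ℝ F ζ 1 - Complex.I * fderiv ℝ F ζ Complex.I)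

/-- The conjugate Wirtinger derivative `∂̄F = ½(∂ₓF + i ∂_yF)`. -/
noncomputable def wirtingerDBar (F : ℂ → ℂ) (ζ : ℂ) : ℂ :=
  (1 / 2) * (fderiv ℝ F ζ 1 + Complex.I * fderiv ℝ F ζ Complex.I)

/-- A `C²` solution of the conjugate Beltrami equation `∂̄F = ν conj(∂F)` with
anti-holomorphic dilatation `ν` of modulus `< 1` is harmonic: `∂∂̄F ≡ 0`. -/
theorem conjugate_beltrami_harmonic (V : Set ℂ) (hV : IsOpen V) (F ν : ℂ → ℂ)
    (hF : ContDiffOn ℝ 2 F V)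
    (hν : DifferentiableOn ℝ ν V)
    (hanti : ∀ ζ ∈ V, wirtingerD ν ζ = 0)
    (hmod : ∀ ζ ∈ V, ‖ν ζ‖ < 1)
    (hbel : ∀ ζ ∈ V, wirtingerDBar F ζ = ν ζ * (starRingEnd ℂ) (wirtingerD F ζ)) :
    ∀ ζ ∈ V, wirtingerD (fun w => wirtingerDBar F w) ζ = 0 := by
  intro ζ hζ
  have hmem : V ∈ nhds ζ := hV.mem_nhds hζ
  have hF2 : ContDiffAt ℝ 2 F ζ := hF.contDiffAt hmem
  have h1 : ContDiffAt ℝ 1 (fderiv ℝ F) ζ := hF2.fderiv_right (by norm_num)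
  have hΦ : DifferentiableAt ℝ (fderiv ℝ F) ζ := h1.differentiableAt one_ne_zero
  set Φ := fderiv ℝ (fderiv ℝ F) ζ with hΦdef
  -- derivative of directional derivatives
  have key : ∀ a : ℂ, fderiv ℝ (fun w => fderiv ℝ F w a) ζ = Φ.flip a := by
    intro a
    have h := fderiv_clm_apply hΦ (differentiableAt_const a)
    simpa using h
  have diffA : ∀ a : ℂ, DifferentiableAt ℝ (fun w => fderiv ℝ F w a) ζ := fun a =>
    hΦ.clm_apply (differentiableAt_const a)
  -- symmetry of the second derivative
  have hev : ∀ᶠ w in nhds ζ, HasFDerivAt F (fderiv ℝ F w) w := by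
    filter_upwards [hmem] with w hw
    exact ((hF.differentiableOn (by norm_num)).differentiableAt (hV.mem_nhds hw)).hasFDerivAt
  have hsymm : Φ 1 Complex.I = Φ Complex.I 1 :=
    second_derivative_symmetric_of_eventually hev hΦ.hasFDerivAt 1 Complex.I
  have hA := diffA 1
  have hB := diffA Complex.I
  -- derivative of wirtingerDBar F
  have hdG : fderiv ℝ (fun w => wirtingerDBar F w) ζ =
      ((1/2 : ℂ) • ((Φ.flip 1) + Complex.I • (Φ.flip Complex.I))) := by
    unfold wirtingerDBar
    rw [fderiv_const_mul (a := fun w => fderiv ℝ F w 1 + Complex.I * fderiv ℝ F w Complex.I) (hA.add (hB.const_mul Complex.I)),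
      fderiv_fun_add hA (hB.const_mul Complex.I), fderiv_const_mul hB, key, key]
  -- derivative of wirtingerD F
  have hdD : fderiv ℝ (fun w => wirtingerD F w) ζ =
      ((1/2 : ℂ) • ((Φ.flip 1) - Complex.I • (Φ.flip Complex.I))) := by
    unfold wirtingerD
    rw [fderiv_const_mul (a := fun w => fderiv ℝ F w 1 - Complex.I * fderiv ℝ F w Complex.I) (hA.sub (hB.const_mul Complex.I)),
      fderiv_fun_sub hA (hB.const_mul Complex.I), fderiv_const_mul hB, key, key]
  have hDdiff : DifferentiableAt ℝ (fun w => wirtingerD F w) ζ := by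
    unfold wirtingerD
    exact (hA.sub (hB.const_mul Complex.I)).const_mul _
  have hνd : DifferentiableAt ℝ ν ζ := (hν ζ hζ).differentiableAt hmem
  -- conj of wirtingerD F
  have hCdiff : DifferentiableAt ℝ (fun w => (starRingEnd ℂ) (wirtingerD F w)) ζ := by
    exact Complex.conjCLE.differentiableAt.comp ζ hDdiff
  have hdC : fderiv ℝ (fun w => (starRingEnd ℂ) (wirtingerD F w)) ζ =
      (Complex.conjCLE : ℂ →L[ℝ] ℂ).comp (fderiv ℝ (fun w => wirtingerD F w) ζ) := by
    exact Complex.conjCLE.comp_fderiv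
  -- the two functions agree near ζ
  have hGR : (fun w => wirtingerDBar F w) =ᶠ[nhds ζ]
      (fun w => ν w * (starRingEnd ℂ) (wirtingerD F w)) := by
    filter_upwards [hmem] with w hw
    exact hbel w hw
  have hfR : fderiv ℝ (fun w => wirtingerDBar F w) ζ =
      fderiv ℝ (fun w => ν w * (starRingEnd ℂ) (wirtingerD F w)) ζ := hGR.fderiv_eq
  have hprod : fderiv ℝ (fun w => ν w * (starRingEnd ℂ) (wirtingerD F w)) ζ =
      ν ζ • fderiv ℝ (fun w => (starRingEnd ℂ) (wirtingerD F w)) ζ +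
        ((starRingEnd ℂ) (wirtingerD F ζ)) • fderiv ℝ ν ζ := fderiv_mul hνd hCdiff
  -- abbreviations for second-derivative entries and first derivatives of ν
  set a := Φ 1 1 with ha
  set b := Φ Complex.I Complex.I with hb
  set p := Φ 1 Complex.I with hp
  set n1 := fderiv ℝ ν ζ 1 with hn1
  set nI := fderiv ℝ ν ζ Complex.I with hnI
  have hanti' : (1/2 : ℂ) * (n1 - Complex.I * nI) = 0 := hanti ζ hζ
  -- compute wirtingerD (wirtingerDBar F) ζ two ways
  have hc1 : wirtingerD (fun w => wirtingerDBar F w) ζ = (1/4 : ℂ) * (a + b) := by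
    unfold wirtingerD
    rw [hdG]
    simp only [ContinuousLinearMap.smul_apply, ContinuousLinearMap.add_apply,
      ContinuousLinearMap.flip_apply, smul_eq_mul]
    rw [← ha, ← hb, ← hp, ← hsymm.symm]
    ring_nf
    rw [Complex.I_sq]
    ring
  have hDbar : wirtingerDBar (fun w => wirtingerD F w) ζ = (1/4 : ℂ) * (a + b) := by
    unfold wirtingerDBar
    rw [hdD]
    simp only [ContinuousLinearMap.smul_apply, ContinuousLinearMap.sub_apply,
      ContinuousLinearMap.flip_apply, smul_eq_mul]
    rw [← ha, ← hb, ← hp, ← hsymm.symm]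
    ring_nf
    rw [Complex.I_sq]
    ring
  have hc2 : wirtingerD (fun w => wirtingerDBar F w) ζ =
      ν ζ * (starRingEnd ℂ) ((1/4 : ℂ) * (a + b)) := by
    unfold wirtingerD
    rw [hfR, hprod]
    simp only [ContinuousLinearMap.add_apply, ContinuousLinearMap.smul_apply, smul_eq_mul]
    rw [hdC, hdD]
    simp only [ContinuousLinearMap.coe_comp', Function.comp_apply,
      ContinuousLinearMap.smul_apply, ContinuousLinearMap.sub_apply,
      ContinuousLinearMap.flip_apply, smul_eq_mul, Complex.conjCLE_apply,
      map_mul, map_sub, map_add, map_one, map_div₀, map_ofNat, map_inv₀, Complex.conj_I]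
    rw [← ha, ← hb, ← hp, ← hsymm, ← hn1, ← hnI]
    simp only [ContinuousLinearEquiv.coe_coe, Complex.conjCLE_apply, map_mul, map_sub,
      map_add, map_div₀, map_one, map_ofNat, Complex.conj_I]
    linear_combination ((starRingEnd ℂ) (wirtingerD F ζ)) * hanti' - (ν ζ * (starRingEnd ℂ) b / 4) * Complex.I_sq
  -- conclude
  set c := (1/4 : ℂ) * (a + b) with hcdef
  have habs : ‖c‖ = ‖ν ζ‖ * ‖c‖ := by
    conv_lhs => rw [← hc1, hc2]
    rw [norm_mul, Complex.norm_conj]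
  clear_value c
  have hc0 : c = 0 := by
    by_contra h
    have hpos : 0 < ‖c‖ := norm_pos_iff.mpr h
    have hlt : ‖ν ζ‖ * ‖c‖ < 1 * ‖c‖ :=
      mul_lt_mul_of_pos_right (hmod ζ hζ) hpos
    rw [one_mul, ← habs] at hlt
    exact lt_irrefl _ hlt
  rw [hc1]
  exact hc0
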